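/- Let C and D be reflexive digraph cycles with D non-contractible, let φ ∈ Hom(C,D), and let P = c_a … c_b be a cutback of C under φ. Then there is a path of up edges in Hom(C,D) from φ to the homomorphism φ' obtained from φ by setting φ'(c_i) = φ(c_a) for all vertices c_i of P (and φ' = φ elsewhere). -/
import Mathlib


open scoped Classical

namespace Recon

/-- Orientation letters for edges of a digraph cycle: `+`, `-`, `*`. -/
inductive Orient : Type
  | plus
  | minus
  | star
deriving DecidableEq

/-- A forward arc is allowed along an edge with this orientation letter. -/
def Orient.fwd : Orient → Prop
  | Orient.plus => True
  | Orient.minus => False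
  | Orient.star => True

/-- A backward arc is allowed along an edge with this orientation letter. -/
def Orient.bwd : Orient → Prop
  | Orient.plus => False
  | Orient.minus => True
  | Orient.star => True

/-- The arc relation of the reflexive digraph cycle on `ZMod m` whose orientation
string is `f`, where `f c` is the orientation of the edge from `c` to `c + 1`. -/
def cycRel {m : ℕ} (f : ZMod m → Orient) (u v : ZMod m) : Prop :=
  u = v ∨ (v = u + 1 ∧ (f u).fwd) ∨ (u = v + 1 ∧ (f v).bwd)

/-- `φ` is a digraph homomorphism. -/
def IsHom {α β : Type*} (rG : α → α → Prop) (rH : β → β → Prop) (φ : α → β) : Prop :=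
  ∀ u v, rG u v → rH (φ u) (φ v)

/-- The arc relation of the Hom-graph `Hom(G,H)`. -/
def HomArc {α β : Type*} (rG : α → α → Prop) (rH : β → β → Prop) (φ ψ : α → β) : Prop :=
  ∀ u v, rG u v → rH (φ u) (ψ v)

/-- `φψ` is an edge of the Hom-graph. -/
def HomEdge {α β : Type*} (rG : α → α → Prop) (rH : β → β → Prop) (φ ψ : α → β) : Prop :=
  HomArc rG rH φ ψ ∨ HomArc rG rH ψ φ

/-- The contribution of the edge `c (c+1)` of `C` to the increase of `φ`:
`1` if increasing, `-1` if decreasing, `0` if stationary. -/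
def edgeVal {m n : ℕ} (φ : ZMod m → ZMod n) (c : ZMod m) : ℤ :=
  if φ (c + 1) = φ c + 1 then 1 else if φ (c + 1) = φ c - 1 then -1 else 0

/-- The increase of a map between cycles: #increasing − #decreasing edges. -/
def increase {m n : ℕ} (φ : ZMod m → ZMod n) : ℤ :=
  ∑ j ∈ Finset.range m, edgeVal φ ((j : ℕ) : ZMod m)

/-- The increase of the subpath `c_a … c_{a+L}`. -/
def partialInc {m n : ℕ} (φ : ZMod m → ZMod n) (a : ZMod m) (L : ℕ) : ℤ :=
  ∑ j ∈ Finset.range L, edgeVal φ (a + ((j : ℕ) : ZMod m))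

/-- `φ` has wind `w`, i.e. its increase is `w * n`. -/
def HasWind {m n : ℕ} (φ : ZMod m → ZMod n) (w : ℤ) : Prop :=
  increase φ = w * (n : ℤ)

/-- A reflexive digraph cycle is non-contractible if it has length at least 4
or is a directed 3-cycle. -/
def NonContractible {n : ℕ} (f : ZMod n → Orient) : Prop :=
  4 ≤ n ∨ (n = 3 ∧ ((∀ i, f i = Orient.plus) ∨ (∀ i, f i = Orient.minus)))

/-- `φ` is increasing: every edge increasing or stationary, not all stationary. -/
def IncMap {m n : ℕ} (φ : ZMod m → ZMod n) : Prop :=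
  (∀ c, φ (c + 1) = φ c + 1 ∨ φ (c + 1) = φ c) ∧ ∃ c, φ (c + 1) = φ c + 1

/-- `φ` is decreasing: every edge decreasing. -/
def DecMap {m n : ℕ} (φ : ZMod m → ZMod n) : Prop :=
  ∀ c, φ (c + 1) = φ c - 1

/-- `φ` is monotone: increasing or decreasing. -/
def MonMap {m n : ℕ} (φ : ZMod m → ZMod n) : Prop :=
  IncMap φ ∨ DecMap φ

/-- `φ` is monotone in the weak sense where constant maps also count. -/
def MonOrConst {m n : ℕ} (φ : ZMod m → ZMod n) : Prop :=
  (∀ c, φ (c + 1) = φ c + 1 ∨ φ (c + 1) = φ c) ∨ DecMap φ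

/-- `Y ≤* X`: `Y` is a `*`-substring of `X`, via a strictly increasing selection
function `α` with `Y i = X (α i)` unless `Y i = *`. -/
def StarSub {p q : ℕ} (Y : Fin p → Orient) (X : Fin q → Orient) : Prop :=
  ∃ α : Fin p → Fin q, StrictMono α ∧ ∀ i, Y i = X (α i) ∨ Y i = Orient.star

/-- The orientation string of the (pointed) cycle `f`. -/
def cycStr {m : ℕ} (f : ZMod m → Orient) : Fin m → Orient :=
  fun j => f ((j : ℕ) : ZMod m)

/-- The orientation string `σ^i(Y^k)` = `(σ^i Y)^k`: the `i`-th shift of the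
`k`-fold concatenation of the string of the cycle `fY`. -/
def shiftPowStr {s : ℕ} (fY : ZMod s → Orient) (k : ℕ) (i : ZMod s) :
    Fin (k * s) → Orient :=
  fun j => fY (i + ((j : ℕ) : ZMod s))

/-- The orientation string `σ^i(Y)^k y_{i+1}` : the `i`-th shift of the `k`-fold
concatenation of the string of `fY`, extended by its own first letter. -/
def shiftPowExtStr {s : ℕ} (fY : ZMod s → Orient) (k : ℕ) (i : ZMod s) :
    Fin (k * s + 1) → Orient :=
  fun j => fY (i + ((j : ℕ) : ZMod s))

/-- Every vertex that moves from `φ` to `ψ`, moves up. -/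
def MovesUpOnly {m n : ℕ} (φ ψ : ZMod m → ZMod n) : Prop :=
  ∀ c, ψ c = φ c ∨ ψ c = φ c + 1

/-- Every vertex that moves from `φ` to `ψ`, moves down. -/
def MovesDownOnly {m n : ℕ} (φ ψ : ZMod m → ZMod n) : Prop :=
  ∀ c, ψ c = φ c ∨ ψ c = φ c - 1

/-- `φψ` is an up edge of the Hom-graph. -/
def UpEdge {m n : ℕ} (rC : ZMod m → ZMod m → Prop) (rD : ZMod n → ZMod n → Prop)
    (φ ψ : ZMod m → ZMod n) : Prop :=
  HomEdge rC rD φ ψ ∧ MovesUpOnly φ ψ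

/-- `φ` and `ψ` are joined by a path (walk) inside the induced subgraph on `S`. -/
def ConnIn {m n : ℕ} (rC : ZMod m → ZMod m → Prop) (rD : ZMod n → ZMod n → Prop)
    (S : Set (ZMod m → ZMod n)) (φ ψ : ZMod m → ZMod n) : Prop :=
  Relation.ReflTransGen (fun a b => a ∈ S ∧ b ∈ S ∧ HomEdge rC rD a b) φ ψ

/-- `ψ` is reachable from `φ` by a path of up edges inside `S`. -/
def UpReachIn {m n : ℕ} (rC : ZMod m → ZMod m → Prop) (rD : ZMod n → ZMod n → Prop)
    (S : Set (ZMod m → ZMod n)) (φ ψ : ZMod m → ZMod n) : Prop :=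
  Relation.ReflTransGen (fun a b => a ∈ S ∧ b ∈ S ∧ UpEdge rC rD a b) φ ψ

/-- One step of a path of up edges between homomorphisms. -/
def UpStep {m n : ℕ} (rC : ZMod m → ZMod m → Prop) (rD : ZMod n → ZMod n → Prop)
    (φ ψ : ZMod m → ZMod n) : Prop :=
  IsHom rC rD φ ∧ IsHom rC rD ψ ∧ UpEdge rC rD φ ψ

/-- The set of vertices on which `φ` and `φ'` differ. -/
def Neq {α β : Type*} (φ φ' : α → β) : Set α := {g | φ g ≠ φ' g}

/-- The map `φ_T`, agreeing with `φ'` on `T` and with `φ` elsewhere. -/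
noncomputable def refineMap {α β : Type*} (φ φ' : α → β) (T : Set α) : α → β :=
  fun g => if g ∈ T then φ' g else φ g

/-- The edge `φφ'` is non-refinable: no nonempty proper subset `T` of `Neq φ φ'`
yields a homomorphism `φ_T`. -/
def NonRefinable {α β : Type*} (rG : α → α → Prop) (rH : β → β → Prop)
    (φ φ' : α → β) : Prop :=
  ¬ ∃ T : Set α, T.Nonempty ∧ T ⊂ Neq φ φ' ∧ IsHom rG rH (refineMap φ φ' T)

/-- `T` is a strong component of the digraph `r`. -/
def IsStrongComponent {α : Type*} (r : α → α → Prop) (T : Set α) : Prop :=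
  T.Nonempty ∧ (∀ u ∈ T, ∀ v ∈ T, Relation.ReflTransGen r u v) ∧
    ∀ T' : Set α, T ⊆ T' → (∀ u ∈ T', ∀ v ∈ T', Relation.ReflTransGen r u v) → T' = T

/-- `T` has no arcs out to vertices not in `T`. -/
def IsTerminal {α : Type*} (r : α → α → Prop) (T : Set α) : Prop :=
  ∀ u ∈ T, ∀ v, r u v → v ∈ T

/-- `Mon_1(C,D;i)`: monotone wind-1 homomorphisms `φ` with `φ c₀ = i`. -/
def Mon1 {m n : ℕ} (fC : ZMod m → Orient) (fD : ZMod n → Orient) (i : ZMod n) :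
    Set (ZMod m → ZMod n) :=
  {φ | IsHom (cycRel fC) (cycRel fD) φ ∧ MonMap φ ∧ increase φ = (n : ℤ) ∧ φ 0 = i}

/-- A one-step up edge: an edge from `φ` obtained by moving all the vertices of a
subpath of `C` mapped to a single vertex `d` up to `d + 1`. -/
def OneStepUp {m n : ℕ} (rC : ZMod m → ZMod m → Prop) (rD : ZMod n → ZMod n → Prop)
    (φ φ' : ZMod m → ZMod n) : Prop :=
  HomEdge rC rD φ φ' ∧
    ∃ (a : ZMod m) (k : ℕ) (d : ZMod n), k < m ∧
      (∀ j : ℕ, j ≤ k → φ (a + ((j : ℕ) : ZMod m)) = d) ∧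
      ∀ c, φ' c = if ∃ j : ℕ, j ≤ k ∧ c = a + ((j : ℕ) : ZMod m) then d + 1 else φ c

/-- The number of increasing edges of `φ` among the first `j` edges of `C`. -/
def incBefore {m n : ℕ} (φ : ZMod m → ZMod n) (j : ℕ) : ℕ :=
  ((Finset.range j).filter fun t =>
    φ (((t : ℕ) : ZMod m) + 1) = φ ((t : ℕ) : ZMod m) + 1).card

/-- One cutback-pushing step: `φ'` is obtained from `φ` by replacing the values of
`φ` on a cutback `c_a … c_{a+L}` by `φ a`. -/
def CutbackStep {m n : ℕ} (φ φ' : ZMod m → ZMod n) : Prop :=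
  ∃ (a : ZMod m) (L : ℕ), L < m ∧ partialInc φ a L = 0 ∧
    (∀ j : ℕ, 0 < j → j < L → partialInc φ a j < 0) ∧
    ∀ c, φ' c = if ∃ j : ℕ, j ≤ L ∧ c = a + ((j : ℕ) : ZMod m) then φ a else φ c

/-- `Mon_1^+(C,D;i)`: wind-1 homomorphisms whose monotone push-up is in `Mon_1(C,D;i)`. -/
def Mon1Plus {m n : ℕ} (fC : ZMod m → Orient) (fD : ZMod n → Orient) (i : ZMod n) :
    Set (ZMod m → ZMod n) :=
  {φ | IsHom (cycRel fC) (cycRel fD) φ ∧ increase φ = (n : ℤ) ∧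
    ∃ ψ ∈ Mon1 fC fD i, Relation.ReflTransGen CutbackStep φ ψ}

lemma zmod_one_ne_zero {n : ℕ} (hn : 3 ≤ n) : (1 : ZMod n) ≠ 0 := by
  haveI : NeZero n := ⟨by omega⟩
  have : ((1:ℕ) : ZMod n) ≠ 0 := by
    rw [Ne, ZMod.natCast_eq_zero_iff]
    exact fun h => by have := Nat.le_of_dvd one_pos h; omega
  simpa using this

lemma zmod_two_ne_zero {n : ℕ} (hn : 3 ≤ n) : (2 : ZMod n) ≠ 0 := by
  haveI : NeZero n := ⟨by omega⟩
  have : ((2:ℕ) : ZMod n) ≠ 0 := by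
    rw [Ne, ZMod.natCast_eq_zero_iff]
    exact fun h => by have := Nat.le_of_dvd two_pos h; omega
  simpa using this

lemma cast_inj_of_lt {m : ℕ} {j j' : ℕ} (hj : j < m) (hj' : j' < m)
    (h : ((j : ℕ) : ZMod m) = ((j' : ℕ) : ZMod m)) : j = j' := by
  haveI : NeZero m := ⟨by omega⟩
  have := congrArg ZMod.val h
  rwa [ZMod.val_cast_of_lt hj, ZMod.val_cast_of_lt hj'] at this

lemma edgeVal_mem {m n : ℕ} (φ : ZMod m → ZMod n) (c : ZMod m) :
    edgeVal φ c = 1 ∨ edgeVal φ c = 0 ∨ edgeVal φ c = -1 := by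
  unfold edgeVal; split_ifs <;> simp

lemma cyc_adj {m : ℕ} (fC : ZMod m → Orient) (c : ZMod m) :
    cycRel fC c (c+1) ∨ cycRel fC (c+1) c := by
  cases h : fC c with
  | plus => exact Or.inl (Or.inr (Or.inl ⟨rfl, by rw [h]; trivial⟩))
  | minus => exact Or.inr (Or.inr (Or.inr ⟨rfl, by rw [h]; trivial⟩))
  | star => exact Or.inl (Or.inr (Or.inl ⟨rfl, by rw [h]; trivial⟩))

lemma hom_tri {m n : ℕ} {fC : ZMod m → Orient} {fD : ZMod n → Orient}
    {φ : ZMod m → ZMod n} (hφ : IsHom (cycRel fC) (cycRel fD) φ) (c : ZMod m) :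
    φ (c+1) = φ c + 1 ∨ φ (c+1) = φ c ∨ φ (c+1) = φ c - 1 := by
  rcases cyc_adj fC c with h | h
  · rcases hφ _ _ h with h1 | ⟨h1,_⟩ | ⟨h1,_⟩
    · exact Or.inr (Or.inl h1.symm)
    · exact Or.inl h1
    · right; right; rw [h1]; ring
  · rcases hφ _ _ h with h1 | ⟨h1,_⟩ | ⟨h1,_⟩
    · exact Or.inr (Or.inl h1)
    · right; right; rw [h1]; ring
    · exact Or.inl h1

lemma hom_step {m n : ℕ} (hn : 3 ≤ n) {fC : ZMod m → Orient} {fD : ZMod n → Orient}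
    {φ : ZMod m → ZMod n} (hφ : IsHom (cycRel fC) (cycRel fD) φ) (c : ZMod m) :
    φ (c+1) = φ c + ((edgeVal φ c : ℤ) : ZMod n) := by
  have h1 := zmod_one_ne_zero hn
  have h2 := zmod_two_ne_zero hn
  rcases hom_tri hφ c with h | h | h
  · rw [edgeVal, if_pos h, h]; push_cast; ring
  · have hx : ¬ (φ (c+1) = φ c + 1) := by
      rw [h]; intro hh; exact h1 (by linear_combination - hh)
    have hy : ¬ (φ (c+1) = φ c - 1) := by
      rw [h]; intro hh; exact h1 (by linear_combination hh)
    rw [edgeVal, if_neg hx, if_neg hy, h]; push_cast; ring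
  · have hx : ¬ (φ (c+1) = φ c + 1) := by
      rw [h]; intro hh; exact h2 (by linear_combination - hh)
    rw [edgeVal, if_neg hx, if_pos h, h]; push_cast; ring

lemma partialInc_succ {m n : ℕ} (φ : ZMod m → ZMod n) (a : ZMod m) (j : ℕ) :
    partialInc φ a (j+1) = partialInc φ a j + edgeVal φ (a + ((j:ℕ) : ZMod m)) := by
  unfold partialInc; rw [Finset.sum_range_succ]

lemma cast_succ_shift {m : ℕ} (a : ZMod m) (j : ℕ) :
    a + (((j+1 : ℕ)) : ZMod m) = (a + ((j:ℕ) : ZMod m)) + 1 := by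
  push_cast; ring

lemma partialInc_val {m n : ℕ} (hn : 3 ≤ n) {fC : ZMod m → Orient} {fD : ZMod n → Orient}
    {φ : ZMod m → ZMod n} (hφ : IsHom (cycRel fC) (cycRel fD) φ) (a : ZMod m) :
    ∀ j : ℕ, φ (a + ((j:ℕ) : ZMod m)) = φ a + ((partialInc φ a j : ℤ) : ZMod n) := by
  intro j
  induction j with
  | zero => simp [partialInc]
  | succ j ih =>
      rw [cast_succ_shift, hom_step hn hφ, ih, partialInc_succ]
      push_cast; ring

lemma partialInc_eq {m n : ℕ} (hn : 3 ≤ n) (ψ : ZMod m → ZMod n) (a : ZMod m)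
    (e : ℕ → ℤ) (L : ℕ) (he0 : e 0 = 0)
    (hstep : ∀ j, j < L → e (j+1) - e j = 1 ∨ e (j+1) - e j = 0 ∨ e (j+1) - e j = -1)
    (hval : ∀ j, j ≤ L → ψ (a + ((j:ℕ) : ZMod m)) = ψ a + ((e j : ℤ) : ZMod n)) :
    ∀ j, j ≤ L → partialInc ψ a j = e j := by
  have h1 := zmod_one_ne_zero hn
  have h2 := zmod_two_ne_zero hn
  intro j
  induction j with
  | zero => intro _; simp [partialInc, he0]
  | succ j ih =>
      intro hj
      have key : ψ (a + ((j:ℕ) : ZMod m) + 1)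
          = ψ (a + ((j:ℕ) : ZMod m)) + (((e (j+1) - e j : ℤ)) : ZMod n) := by
        rw [← cast_succ_shift, hval (j+1) hj, hval j (by omega)]
        push_cast; ring
      have hE : edgeVal ψ (a + ((j:ℕ) : ZMod m)) = e (j+1) - e j := by
        rcases hstep j (by omega) with h | h | h
        · rw [h] at key ⊢
          rw [edgeVal, if_pos (by rw [key]; norm_num)]
        · rw [h] at key ⊢
          have hx : ¬ (ψ (a + ((j:ℕ) : ZMod m) + 1) = ψ (a + ((j:ℕ) : ZMod m)) + 1) := by
            rw [key]; intro hh; exact h1 (by linear_combination - hh)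
          have hy : ¬ (ψ (a + ((j:ℕ) : ZMod m) + 1) = ψ (a + ((j:ℕ) : ZMod m)) - 1) := by
            rw [key]; intro hh; exact h1 (by linear_combination hh)
          rw [edgeVal, if_neg hx, if_neg hy]
        · rw [h] at key ⊢
          have hx : ¬ (ψ (a + ((j:ℕ) : ZMod m) + 1) = ψ (a + ((j:ℕ) : ZMod m)) + 1) := by
            rw [key]; intro hh; exact h2 (by linear_combination - hh)
          rw [edgeVal, if_neg hx, if_pos (by rw [key]; push_cast; ring)]
      rw [partialInc_succ, ih (by omega), hE]; ring

lemma main_push {m n : ℕ} (hm : 3 ≤ m) (hn : 3 ≤ n)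
    (fC : ZMod m → Orient) (fD : ZMod n → Orient)
    (a : ZMod m) (L : ℕ) (hL : L < m) :
    ∀ N : ℕ, ∀ φ : ZMod m → ZMod n, IsHom (cycRel fC) (cycRel fD) φ →
      (∀ j : ℕ, 0 < j → j < L →
        -(N:ℤ) ≤ partialInc φ a j ∧ partialInc φ a j ≤ 0) →
      partialInc φ a L = 0 →
      Relation.ReflTransGen (UpStep (cycRel fC) (cycRel fD)) φ
        (fun c => if ∃ j : ℕ, j ≤ L ∧ c = a + ((j:ℕ) : ZMod m) then φ a else φ c) := by
  have hadj : ∀ u v : ZMod m, cycRel fC u v → u = v ∨ v = u + 1 ∨ u = v + 1 := by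
    rintro u v (h | ⟨h, _⟩ | ⟨h, _⟩) <;> tauto
  intro N
  induction N with
  | zero =>
      intro φ hφ hb hL0
      have hzero : ∀ j, j ≤ L → partialInc φ a j = 0 := by
        intro j hj
        rcases Nat.lt_or_ge j L with h | h
        · rcases Nat.eq_zero_or_pos j with rfl | hj0
          · simp [partialInc]
          · have := hb j hj0 h; omega
        · have hjL : j = L := by omega
          rw [hjL, hL0]
      have heq : (fun c => if ∃ j : ℕ, j ≤ L ∧ c = a + ((j:ℕ) : ZMod m) then φ a
          else φ c) = φ := by
        funext c
        split
        next h =>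
          obtain ⟨j, hj, rfl⟩ := h
          rw [partialInc_val hn hφ a j, hzero j hj]
          simp
        next => rfl
      rw [heq]
  | succ N ih =>
      intro φ hφ hb hL0
      set μ : ℤ := -((N:ℤ)+1) with hμ
      set x : ZMod n := φ a + ((μ : ℤ) : ZMod n) with hxdef
      set M : ZMod m → Prop :=
        fun c => ∃ j : ℕ, 0 < j ∧ j < L ∧ partialInc φ a j = μ ∧ c = a + ((j:ℕ) : ZMod m)
        with hMdef
      set ψ : ZMod m → ZMod n := fun c => if M c then φ c + 1 else φ c with hψdef
      have hv : ∀ j : ℕ, φ (a + ((j:ℕ) : ZMod m))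
          = φ a + ((partialInc φ a j : ℤ) : ZMod n) := partialInc_val hn hφ a
      have hstepd : ∀ j : ℕ, partialInc φ a (j+1) - partialInc φ a j = 1 ∨
          partialInc φ a (j+1) - partialInc φ a j = 0 ∨
          partialInc φ a (j+1) - partialInc φ a j = -1 := by
        intro j
        have h := partialInc_succ φ a j
        rcases edgeVal_mem φ (a + ((j:ℕ):ZMod m)) with h' | h' | h' <;> omega
      have hrange : ∀ k, k ≤ L → partialInc φ a k = 0 ∨
          (0 < k ∧ k < L ∧ μ ≤ partialInc φ a k ∧ partialInc φ a k ≤ 0) := by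
        intro k hk
        rcases Nat.eq_zero_or_pos k with rfl | h0
        · left; simp [partialInc]
        · rcases eq_or_lt_of_le hk with rfl | hkL
          · left; exact hL0
          · have := hb k h0 hkL
            right; exact ⟨h0, hkL, by omega, by omega⟩
      have hMx : ∀ c, M c → φ c = x := by
        rintro c ⟨j, hj0, hjL, hjμ, rfl⟩
        rw [hv j, hjμ]
      have hMa : ¬ M a := by
        rintro ⟨j, hj0, hjL, hjμ, hja⟩
        have h0 : a + (((0:ℕ)):ZMod m) = a + ((j:ℕ):ZMod m) := by
          simpa using hja
        have := cast_inj_of_lt (by omega) (by omega) (add_left_cancel h0)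
        omega
      have hψ_pos : ∀ c, M c → ψ c = x + 1 := by
        intro c h
        simp only [hψdef]
        rw [if_pos h, hMx c h]
      have hψ_neg : ∀ c, ¬ M c → ψ c = φ c := by
        intro c h
        simp only [hψdef]
        rw [if_neg h]
      -- neighbor analysis
      have hnb : ∀ j : ℕ, 0 < j → j < L → partialInc φ a j = μ →
          ∀ u : ZMod m, (u = a + ((j:ℕ):ZMod m) + 1 ∨ a + ((j:ℕ):ZMod m) = u + 1) →
          (M u ∨ φ u = x + 1) := by
        intro j hj0 hjL hjμ u hu
        rcases hu with rfl | hu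
        · have hu' : a + ((j:ℕ):ZMod m) + 1 = a + (((j+1:ℕ)):ZMod m) :=
            (cast_succ_shift a j).symm
          have hstep := hstepd j
          have hr := hrange (j+1) (by omega)
          have hcase : partialInc φ a (j+1) = μ ∨ partialInc φ a (j+1) = μ + 1 := by omega
          rcases hcase with h | h
          · rcases hr with h0 | ⟨_, hlt, _⟩
            · exfalso; omega
            · exact Or.inl ⟨j+1, by omega, hlt, h, hu'⟩
          · right
            rw [hu', hv (j+1), h, hxdef]
            push_cast; ring
        · obtain ⟨k, rfl⟩ : ∃ k, j = k + 1 := ⟨j-1, by omega⟩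
          have hu' : u = a + ((k:ℕ):ZMod m) := by
            have h2 := hu
            rw [cast_succ_shift] at h2
            exact (add_right_cancel h2).symm
          have hstep := hstepd k
          have hr := hrange k (by omega)
          have hcase : partialInc φ a k = μ ∨ partialInc φ a k = μ + 1 := by omega
          rcases hcase with h | h
          · have hk0 : 0 < k := by
              rcases Nat.eq_zero_or_pos k with rfl | h'
              · exfalso
                have hp0 : partialInc φ a 0 = 0 := by simp [partialInc]
                omega
              · exact h'
            exact Or.inl ⟨k, hk0, by omega, h, hu'⟩
          · right
            rw [hu', hv k, h, hxdef]
            push_cast; ring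
      have hψhom : IsHom (cycRel fC) (cycRel fD) ψ := by
        intro u v huv
        by_cases hu : M u <;> by_cases hvv : M v
        · rw [hψ_pos u hu, hψ_pos v hvv]; exact Or.inl rfl
        · rcases hadj u v huv with rfl | h | h
          · exact absurd hu hvv
          · obtain ⟨j, hj0, hjL, hjμ, rfl⟩ := hu
            rcases hnb j hj0 hjL hjμ v (Or.inl h) with hMv | hφv
            · exact absurd hMv hvv
            · rw [hψ_pos _ ⟨j, hj0, hjL, hjμ, rfl⟩, hψ_neg v hvv, hφv]
              exact Or.inl rfl
          · obtain ⟨j, hj0, hjL, hjμ, rfl⟩ := hu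
            rcases hnb j hj0 hjL hjμ v (Or.inr h) with hMv | hφv
            · exact absurd hMv hvv
            · rw [hψ_pos _ ⟨j, hj0, hjL, hjμ, rfl⟩, hψ_neg v hvv, hφv]
              exact Or.inl rfl
        · rcases hadj u v huv with rfl | h | h
          · exact absurd hvv hu
          · obtain ⟨j, hj0, hjL, hjμ, rfl⟩ := hvv
            rcases hnb j hj0 hjL hjμ u (Or.inr h) with hMu | hφu
            · exact absurd hMu hu
            · rw [hψ_pos _ ⟨j, hj0, hjL, hjμ, rfl⟩, hψ_neg u hu, hφu]
              exact Or.inl rfl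
          · obtain ⟨j, hj0, hjL, hjμ, rfl⟩ := hvv
            rcases hnb j hj0 hjL hjμ u (Or.inl h) with hMu | hφu
            · exact absurd hMu hu
            · rw [hψ_pos _ ⟨j, hj0, hjL, hjμ, rfl⟩, hψ_neg u hu, hφu]
              exact Or.inl rfl
        · rw [hψ_neg u hu, hψ_neg v hvv]; exact hφ u v huv
      have hfb : (fD x).fwd ∨ (fD x).bwd := by
        cases h : fD x
        · exact Or.inl trivial
        · exact Or.inr trivial
        · exact Or.inl trivial
      have hedge : HomEdge (cycRel fC) (cycRel fD) φ ψ := by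
        rcases hfb with hf | hbk
        · left
          intro u v huv
          by_cases hvv : M v
          · rw [hψ_pos v hvv]
            rcases hadj u v huv with rfl | h | h
            · rw [hMx u hvv]
              exact Or.inr (Or.inl ⟨rfl, hf⟩)
            · obtain ⟨j, hj0, hjL, hjμ, rfl⟩ := hvv
              rcases hnb j hj0 hjL hjμ u (Or.inr h) with hMu | hφu
              · rw [hMx u hMu]; exact Or.inr (Or.inl ⟨rfl, hf⟩)
              · rw [hφu]; exact Or.inl rfl
            · obtain ⟨j, hj0, hjL, hjμ, rfl⟩ := hvv
              rcases hnb j hj0 hjL hjμ u (Or.inl h) with hMu | hφu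
              · rw [hMx u hMu]; exact Or.inr (Or.inl ⟨rfl, hf⟩)
              · rw [hφu]; exact Or.inl rfl
          · rw [hψ_neg v hvv]; exact hφ u v huv
        · right
          intro u v huv
          by_cases hu : M u
          · rw [hψ_pos u hu]
            rcases hadj u v huv with rfl | h | h
            · rw [hMx u hu]
              exact Or.inr (Or.inr ⟨rfl, hbk⟩)
            · obtain ⟨j, hj0, hjL, hjμ, rfl⟩ := hu
              rcases hnb j hj0 hjL hjμ v (Or.inl h) with hMv | hφv
              · rw [hMx v hMv]; exact Or.inr (Or.inr ⟨rfl, hbk⟩)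
              · rw [hφv]; exact Or.inl rfl
            · obtain ⟨j, hj0, hjL, hjμ, rfl⟩ := hu
              rcases hnb j hj0 hjL hjμ v (Or.inr h) with hMv | hφv
              · rw [hMx v hMv]; exact Or.inr (Or.inr ⟨rfl, hbk⟩)
              · rw [hφv]; exact Or.inl rfl
          · rw [hψ_neg u hu]; exact hφ u v huv
      have hup : MovesUpOnly φ ψ := by
        intro c
        by_cases h : M c
        · right; simp only [hψdef]; rw [if_pos h]
        · left; exact hψ_neg c h
      -- the profile of ψ
      set e : ℕ → ℤ := fun j =>
        if 0 < j ∧ j < L ∧ partialInc φ a j = μ then partialInc φ a j + 1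
        else partialInc φ a j with hedef
      have he0 : e 0 = 0 := by
        simp only [hedef]
        rw [if_neg (by omega)]
        simp [partialInc]
      have hψa : ψ a = φ a := hψ_neg a hMa
      have hψval : ∀ j, j ≤ L → ψ (a + ((j:ℕ):ZMod m)) = ψ a + ((e j : ℤ) : ZMod n) := by
        intro j hj
        rw [hψa]
        by_cases hc : 0 < j ∧ j < L ∧ partialInc φ a j = μ
        · have hM : M (a + ((j:ℕ):ZMod m)) := ⟨j, hc.1, hc.2.1, hc.2.2, rfl⟩
          have h1 : ψ (a + ((j:ℕ):ZMod m)) = φ (a + ((j:ℕ):ZMod m)) + 1 := by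
            simp only [hψdef]; rw [if_pos hM]
          rw [h1, hv j]
          simp only [hedef]
          rw [if_pos hc]
          push_cast; ring
        · have hM : ¬ M (a + ((j:ℕ):ZMod m)) := by
            rintro ⟨j', hj0', hjL', hjμ', hj'⟩
            have hjj : j = j' := cast_inj_of_lt (by omega) (by omega) (add_left_cancel hj')
            exact hc ⟨by omega, by omega, by rw [hjj]; exact hjμ'⟩
          rw [hψ_neg _ hM, hv j]
          simp only [hedef]
          rw [if_neg hc]
      have hestep : ∀ j, j < L → e (j+1) - e j = 1 ∨ e (j+1) - e j = 0 ∨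
          e (j+1) - e j = -1 := by
        intro j hj
        have h01 := hstepd j
        have hrj := hrange j (by omega)
        have hrj1 := hrange (j+1) (by omega)
        simp only [hedef]
        split_ifs <;> omega
      have heL : e L = 0 := by
        simp only [hedef]
        rw [if_neg (by rintro ⟨_, h, _⟩; omega)]
        exact hL0
      have hepI : ∀ j, j ≤ L → partialInc ψ a j = e j :=
        partialInc_eq hn ψ a e L he0 hestep hψval
      have hbψ : ∀ j : ℕ, 0 < j → j < L →
          -(N:ℤ) ≤ partialInc ψ a j ∧ partialInc ψ a j ≤ 0 := by
        intro j h0 hjL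
        rw [hepI j (le_of_lt hjL)]
        have := hb j h0 hjL
        simp only [hedef]
        split_ifs <;> constructor <;> omega
      have hLψ : partialInc ψ a L = 0 := by rw [hepI L le_rfl, heL]
      have htail := ih ψ hψhom hbψ hLψ
      have htarg : (fun c => if ∃ j : ℕ, j ≤ L ∧ c = a + ((j:ℕ) : ZMod m) then ψ a
          else ψ c) = (fun c => if ∃ j : ℕ, j ≤ L ∧ c = a + ((j:ℕ) : ZMod m) then φ a
          else φ c) := by
        funext c
        by_cases h : ∃ j : ℕ, j ≤ L ∧ c = a + ((j:ℕ) : ZMod m)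
        · rw [if_pos h, if_pos h, hψa]
        · rw [if_neg h, if_neg h]
          refine hψ_neg c ?_
          rintro ⟨j, hj0, hjL, hjμ, rfl⟩
          exact h ⟨j, le_of_lt hjL, rfl⟩
      rw [htarg] at htail
      exact Relation.ReflTransGen.head ⟨hφ, hψhom, hedge, hup⟩ htail

/-- from any `φ ∈ Hom(C,D)` and any cutback `c_a … c_{a+L}` of `C` under
`φ`, there is a path of up edges from `φ` to the homomorphism `φ'` obtained from `φ`
by setting `φ'` equal to `φ a` on the cutback. -/
theorem cutback_push_up (m n : ℕ) (hm : 3 ≤ m)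
    (fC : ZMod m → Orient) (fD : ZMod n → Orient) (hD : NonContractible fD)
    (φ : ZMod m → ZMod n) (hφ : IsHom (cycRel fC) (cycRel fD) φ)
    (a : ZMod m) (L : ℕ) (hL : L < m)
    (hcut0 : partialInc φ a L = 0)
    (hcutneg : ∀ j : ℕ, 0 < j → j < L → partialInc φ a j < 0)
    (φ' : ZMod m → ZMod n)
    (hφ'def : ∀ c, φ' c =
      if ∃ j : ℕ, j ≤ L ∧ c = a + ((j : ℕ) : ZMod m) then φ a else φ c) :
    Relation.ReflTransGen (UpStep (cycRel fC) (cycRel fD)) φ φ' := by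
  have hn : 3 ≤ n := by rcases hD with h | ⟨h, _⟩ <;> omega
  have hlow : ∀ j : ℕ, -(j:ℤ) ≤ partialInc φ a j := by
    intro j
    have h := Finset.card_nsmul_le_sum (Finset.range j)
      (fun t => edgeVal φ (a + ((t:ℕ):ZMod m))) (-1)
      (fun t _ => by
        show (-1:ℤ) ≤ edgeVal φ (a + ((t:ℕ):ZMod m))
        rcases edgeVal_mem φ (a + ((t:ℕ):ZMod m)) with h' | h' | h' <;> omega)
    have h2 : (j:ℤ) * (-1) ≤ ∑ t ∈ Finset.range j, edgeVal φ (a + ((t:ℕ):ZMod m)) := by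
      simpa [nsmul_eq_mul] using h
    unfold partialInc
    linarith
  have hbounds : ∀ j : ℕ, 0 < j → j < L →
      -(L:ℤ) ≤ partialInc φ a j ∧ partialInc φ a j ≤ 0 := by
    intro j h0 hjL
    have h1 := hlow j
    have h2 := hcutneg j h0 hjL
    constructor
    · have : (j:ℤ) ≤ (L:ℤ) := by exact_mod_cast le_of_lt hjL
      omega
    · omega
  have hφ'eq : φ' = fun c =>
      if ∃ j : ℕ, j ≤ L ∧ c = a + ((j : ℕ) : ZMod m) then φ a else φ c :=
    funext hφ'def
  rw [hφ'eq]
  exact main_push hm hn fC fD a L hL L φ hφ hbounds hcut0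

end Recon
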